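/- Let F be a field of characteristic zero and E a set. Let G_free = ⋆_{e∈E} F_e be the free product of copies of the additive group (F,+) indexed by E, acting on integrable modules of the free Lie algebra g on E via t_e ↦ exp(t·e). Then this action of G_free on the class of finite-dimensional integrable g-modules with finite support is faithful: every element of G_free \ {1}, written in reduced form t_{e_p} ∗ ⋯ ∗ t_{e_1} with consecutive letters distinct and all t_{e_j} ≠ 0, acts nontrivially on the module V(e_1⋯e_p) with basis b_0,...,b_p where e_j b_{j-1} = b_j and all other generator actions on basis vectors are zero. -/

import Mathlib

/-- The action of the generator `e` of the free Lie algebra on the module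
`V(e₁⋯e_p)` with basis `b_0, ..., b_p`:  `e · b_{j-1} = b_j` if `e = e_j`, and all
other generator actions on basis vectors are zero. -/
noncomputable def genAct {F : Type*} [Field F] {E : Type*} [DecidableEq E] {p : ℕ}
    (es : Fin p → E) (e : E) : Module.End F (Fin (p + 1) → F) where
  toFun v i := Fin.cases 0 (fun j => if es j = e then v j.castSucc else 0) i
  map_add' v w := by
    funext i
    refine Fin.cases ?_ (fun j => ?_) i
    · simp
    · by_cases h : es j = e <;> simp [h]
  map_smul' c v := by
    funext i
    refine Fin.cases ?_ (fun j => ?_) i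
    · simp
    · by_cases h : es j = e <;> simp [h]

/-- faithfulness of the action of the free product `G_free = ⋆_{e∈E}(F,+)`
on finite-dimensional integrable modules of the free Lie algebra with finite support.
Every nontrivial reduced word `t_{e_p} ∗ ⋯ ∗ t_{e_1}` (consecutive letters distinct,
all `t_j ≠ 0`) acts nontrivially on `V(e₁⋯e_p)`: since each `e_j` acts with square
zero there, `exp(t_j e_j) = 1 + t_j e_j`, and the composite
`exp(t_p e_p)⋯exp(t_1 e_1)` moves the basis vector `b_0`. -/
theorem genAct_apply {F : Type*} [Field F] {E : Type*} [DecidableEq E] {p : ℕ}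
    (es : Fin p → E) (e : E) (v : Fin (p+1) → F) (i : Fin (p+1)) :
    genAct es e v i = Fin.cases 0 (fun j => if es j = e then v j.castSucc else 0) i := rfl

theorem stmt6 {F : Type*} [Field F] [CharZero F] {E : Type*} [DecidableEq E]
    {p : ℕ} (hp : 0 < p) (es : Fin p → E)
    (hd : ∀ (j : ℕ) (h : j + 1 < p),
      es ⟨j, lt_of_le_of_lt (Nat.le_succ j) h⟩ ≠ es ⟨j + 1, h⟩)
    (t : Fin p → F) (ht : ∀ j, t j ≠ 0) :
    (((List.ofFn fun j : Fin p =>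
        (1 : Module.End F (Fin (p + 1) → F)) + t j • genAct es (es j)).reverse.prod :
          Module.End F (Fin (p + 1) → F))
      (Pi.single 0 1) : Fin (p + 1) → F) ≠ Pi.single 0 1 := by
  set f : Fin p → Module.End F (Fin (p + 1) → F) :=
    fun j => (1 : Module.End F (Fin (p + 1) → F)) + t j • genAct es (es j) with hf
  have key : ∀ k (hk : k ≤ p),
      ((((List.ofFn fun j : Fin k => f (Fin.castLE hk j)).reverse.prod)
        (Pi.single 0 1) : Fin (p+1) → F) ⟨k, by omega⟩ =
        ∏ j : Fin k, t (Fin.castLE hk j)) ∧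
      ∀ i : Fin (p+1), k < (i : ℕ) →
      ((((List.ofFn fun j : Fin k => f (Fin.castLE hk j)).reverse.prod)
        (Pi.single 0 1) : Fin (p+1) → F) i = 0) := by
    intro k
    induction k with
    | zero =>
      intro hk
      constructor
      · simp [List.ofFn_zero, Pi.single_apply]
      · intro i hi
        have hne : (0 : Fin (p+1)) ≠ i := by
          intro h; rw [← h] at hi; simp at hi
        simp [List.ofFn_zero, Pi.single_apply, hne]
    | succ k ih =>
      intro hk
      have hk' : k ≤ p := Nat.le_of_succ_le hk
      obtain ⟨ih1, ih2⟩ := ih hk'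
      have hlist : (List.ofFn fun j : Fin (k+1) => f (Fin.castLE hk j)) =
          (List.ofFn fun j : Fin k => f (Fin.castLE hk' j)).concat
            (f ⟨k, hk⟩) := by
        rw [List.ofFn_succ']
        rfl
      set w : Fin (p+1) → F :=
        (((List.ofFn fun j : Fin k => f (Fin.castLE hk' j)).reverse.prod)
          (Pi.single 0 1) : Fin (p+1) → F) with hw
      have hstep : ∀ i : Fin (p+1),
          ((((List.ofFn fun j : Fin (k+1) => f (Fin.castLE hk j)).reverse.prod)
            (Pi.single 0 1) : Fin (p+1) → F) i) = (f ⟨k, hk⟩ w) i := by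
        intro i
        rw [hlist, List.concat_eq_append, List.reverse_append]
        simp [List.prod_cons]
        rfl
      have happ : ∀ i : Fin (p+1), (f ⟨k, hk⟩ w) i
          = w i + t ⟨k, hk⟩ * (genAct es (es ⟨k, hk⟩) w) i := by
        intro i
        simp [hf, LinearMap.add_apply, LinearMap.smul_apply]
        try ring
      constructor
      · rw [hstep, happ]
        have hz : w ⟨k+1, by omega⟩ = 0 := ih2 ⟨k+1, by omega⟩ (Nat.lt_succ_self k)
        have hgen : (genAct es (es ⟨k, hk⟩)) w ⟨k+1, by omega⟩ = w ⟨k, by omega⟩ := by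
          rw [show (⟨k+1, by omega⟩ : Fin (p+1)) = (⟨k, hk⟩ : Fin p).succ from rfl,
            genAct_apply]
          simp
        rw [hz, hgen, ih1, zero_add, Fin.prod_univ_castSucc, mul_comm]
        rfl
      · intro i hi
        rw [hstep, happ]
        have hi1 : 1 ≤ (i : ℕ) := by omega
        have hisucc : i = ((⟨(i : ℕ) - 1, by omega⟩ : Fin p)).succ := by
          ext; simp; omega
        have hz1 : w i = 0 := ih2 i (by omega)
        have hz2 : w (Fin.castSucc (⟨(i : ℕ) - 1, by omega⟩ : Fin p)) = 0 := by
          apply ih2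
          simp
          omega
        rw [hz1, hisucc, genAct_apply]
        simp only [Fin.cases_succ]
        rw [hz2]
        simp
  obtain ⟨k1, -⟩ := key p le_rfl
  intro hcon
  have h1 : ((((List.ofFn fun j : Fin p => f (Fin.castLE le_rfl j)).reverse.prod)
        (Pi.single 0 1) : Fin (p+1) → F) ⟨p, by omega⟩) = (Pi.single 0 1 : Fin (p+1) → F) ⟨p, by omega⟩ := by
    rw [show (fun j : Fin p => f (Fin.castLE le_rfl j)) = f from rfl]
    exact congrFun hcon _
  rw [k1] at h1
  have h2 : (Pi.single 0 1 : Fin (p+1) → F) ⟨p, by omega⟩ = 0 := by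
    rw [Pi.single_apply, if_neg]
    intro h
    have := congrArg Fin.val h
    simp at this
    omega
  rw [h2] at h1
  exact absurd h1 (Finset.prod_ne_zero_iff.mpr (fun j _ => ht _))
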